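/- Generic performance, second part: fix j ∈ {1,…,N} and a decoupled optimizer π^dec_j ∈ S^dec_j. If there exists π^cen ∈ S^cen with V_{β̄}(π^cen) < V_{β̄}(π^dec_j), where β̄ := (1/N,…,1/N), then there exists ε̄ > 0 such that for every ε ∈ [0, ε̄) and every CAL optimizer (π*_1,…,π*_N,π*_c) ∈ S^CAL(ε), one has V_{β̄}(π*_j) ≤ V_{β̄}(π^dec_j). -/

import Mathlib

open scoped BigOperators

section AuxTsum

private lemma abs_tsum_le_tsum_of_le {f g : ℕ → ℝ} (hg : Summable g) (h : ∀ n, |f n| ≤ g n) :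
    |∑' n, f n| ≤ ∑' n, g n := by
  have hf : Summable f := Summable.of_norm_bounded hg h
  have hfa : Summable (fun n => ‖f n‖) := hf.norm
  have h1 : ‖∑' n, f n‖ ≤ ∑' n, ‖f n‖ := norm_tsum_le_tsum_norm hfa
  simp only [Real.norm_eq_abs] at h1 hfa
  exact h1.trans (Summable.tsum_le_tsum h hfa hg)

private lemma summable_geom' {γ : ℝ} (hγ : γ ∈ Set.Ioo (0:ℝ) 1) :
    Summable (fun t : ℕ => γ ^ t) :=
  summable_geometric_of_lt_one hγ.1.le hγ.2

private lemma summable_tgeom' {γ : ℝ} (hγ : γ ∈ Set.Ioo (0:ℝ) 1) :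
    Summable (fun t : ℕ => (t : ℝ) * γ ^ t) := by
  have := summable_pow_mul_geometric_of_norm_lt_one (R := ℝ) 1
    (by rw [Real.norm_eq_abs, abs_of_pos hγ.1]; exact hγ.2)
  simpa using this

end AuxTsum

set_option linter.unusedSectionVars false
section OpBounds

variable {S : Type*} [Fintype S] [DecidableEq S]

/-- ℓ¹→ℓ¹ operator norm bound for a matrix. -/
private def OpB (M : Matrix S S ℝ) (c : ℝ) : Prop :=
  ∀ x : S → ℝ, ∑ s', |M.mulVec x s'| ≤ c * ∑ s, |x s|

private lemma opB_transpose {M : Matrix S S ℝ} {c : ℝ} (h : ∀ s, ∑ s', |M s s'| ≤ c) :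
    OpB M.transpose c := by
  intro x
  calc ∑ s', |M.transpose.mulVec x s'|
      ≤ ∑ s', ∑ s, |M s s'| * |x s| := by
        refine Finset.sum_le_sum fun s' _ => ?_
        rw [Matrix.mulVec, dotProduct]
        refine (Finset.abs_sum_le_sum_abs _ _).trans (le_of_eq ?_)
        exact Finset.sum_congr rfl fun s _ => by
          simp [Matrix.transpose_apply, abs_mul]
    _ = ∑ s, (∑ s', |M s s'|) * |x s| := by
        rw [Finset.sum_comm]
        exact Finset.sum_congr rfl fun s _ => (Finset.sum_mul _ _ _).symm
    _ ≤ ∑ s, c * |x s| := Finset.sum_le_sum fun s _ =>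
        mul_le_mul_of_nonneg_right (h s) (abs_nonneg _)
    _ = c * ∑ s, |x s| := (Finset.mul_sum _ _ _).symm

private lemma OpB.mulB {M N : Matrix S S ℝ} {c d : ℝ} (hc : 0 ≤ c)
    (hM : OpB M c) (hN : OpB N d) : OpB (M * N) (c * d) := by
  intro x
  have hmv : (M * N).mulVec x = M.mulVec (N.mulVec x) := by
    rw [Matrix.mulVec_mulVec]
  rw [hmv]
  calc ∑ s', |M.mulVec (N.mulVec x) s'| ≤ c * ∑ s, |N.mulVec x s| := hM _
    _ ≤ c * (d * ∑ s, |x s|) := mul_le_mul_of_nonneg_left (hN x) hc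
    _ = (c * d) * ∑ s, |x s| := by ring

private lemma OpB.powB {M : Matrix S S ℝ} (hM : OpB M 1) : ∀ t : ℕ, OpB (M ^ t) 1
  | 0 => by
      intro x
      simp [Matrix.one_mulVec]
  | (t + 1) => by
      have := OpB.mulB zero_le_one (OpB.powB hM t) hM
      rw [one_mul] at this
      rw [pow_succ]
      exact this

private lemma opB_pow_sub {X Y : Matrix S S ℝ} {c : ℝ} (hc : 0 ≤ c)
    (hX : OpB X 1) (hY : OpB Y 1) (hXY : OpB (X - Y) c) :
    ∀ t : ℕ, OpB (X ^ t - Y ^ t) ((t : ℝ) * c)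
  | 0 => by
      intro x
      simp only [pow_zero, sub_self, Matrix.zero_mulVec, Pi.zero_apply, abs_zero,
        Finset.sum_const_zero, Nat.cast_zero, zero_mul]
      positivity
  | (t + 1) => by
      have key : X ^ (t + 1) - Y ^ (t + 1) = X * (X ^ t - Y ^ t) + (X - Y) * Y ^ t := by
        rw [pow_succ', pow_succ']
        noncomm_ring
      intro x
      have h1 := (OpB.mulB zero_le_one hX (opB_pow_sub hc hX hY hXY t)) x
      have h2 := (OpB.mulB hc hXY (OpB.powB hY t)) x
      rw [key, Matrix.add_mulVec]
      calc ∑ s', |(X * (X ^ t - Y ^ t)).mulVec x s' + ((X - Y) * Y ^ t).mulVec x s'|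
          ≤ ∑ s', (|(X * (X ^ t - Y ^ t)).mulVec x s'| + |((X - Y) * Y ^ t).mulVec x s'|) :=
            Finset.sum_le_sum fun s _ => abs_add_le _ _
        _ = (∑ s', |(X * (X ^ t - Y ^ t)).mulVec x s'|)
            + ∑ s', |((X - Y) * Y ^ t).mulVec x s'| := Finset.sum_add_distrib
        _ ≤ 1 * ((t : ℝ) * c) * ∑ s, |x s| + c * 1 * ∑ s, |x s| := add_le_add h1 h2
        _ = ((t + 1 : ℕ) : ℝ) * c * ∑ s, |x s| := by push_cast; ring

private lemma single_abs_le_sum {v : S → ℝ} (s : S) : |v s| ≤ ∑ s', |v s'| :=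
  Finset.single_le_sum (fun s' _ => abs_nonneg (v s')) (Finset.mem_univ s)

end OpBounds


variable {S A : Type*}

/-- A stationary policy: nonnegative entries with unit row sums. -/
def IsPolicy [Fintype A] (π : S → A → ℝ) : Prop :=
  (∀ s a, 0 ≤ π s a) ∧ ∀ s, ∑ a, π s a = 1

/-- A transition kernel: nonnegative entries with unit row sums. -/
def IsKernel [Fintype S] (P : S × A → S → ℝ) : Prop :=
  (∀ p s', 0 ≤ P p s') ∧ ∀ p, ∑ s', P p s' = 1

/-- An initial distribution. -/
def IsInitDist [Fintype S] (ν : S → ℝ) : Prop :=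
  (∀ s, 0 ≤ ν s) ∧ ∑ s, ν s = 1

/-- Induced state transition matrix `P_π(s,s') = Σ_a π(s,a) P((s,a),s')`. -/
noncomputable def polMatrix [Fintype A] (P : S × A → S → ℝ) (π : S → A → ℝ) :
    Matrix S S ℝ :=
  Matrix.of fun s s' => ∑ a, π s a * P (s, a) s'

/-- Discounted state distribution `ρ_π(s) = Σ_t γ^t ((P_πᵀ)^t ν)(s)`. -/
noncomputable def stateDist [Fintype S] [Fintype A] [DecidableEq S]
    (γ : ℝ) (ν : S → ℝ) (P : S × A → S → ℝ) (π : S → A → ℝ) (s : S) : ℝ :=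
  ∑' t : ℕ, γ ^ t * (((polMatrix P π).transpose ^ t).mulVec ν s)

/-- Discounted occupation measure `μ_π(s,a) = π(s,a) ρ_π(s)`. -/
noncomputable def occ [Fintype S] [Fintype A] [DecidableEq S]
    (γ : ℝ) (ν : S → ℝ) (P : S × A → S → ℝ) (π : S → A → ℝ) (s : S) (a : A) : ℝ :=
  π s a * stateDist γ ν P π s

/-- `‖Ψᵀ μ^i_π − Ψᵀ μ^i_{π^{E_i}}‖₁`: the worst-case cost discrepancy of policy `π`
with respect to the expert in environment `i`. -/
noncomputable def discrep {N nc : ℕ} [Fintype S] [Fintype A] [DecidableEq S]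
    (γ : ℝ) (ν : S → ℝ) (P : Fin N → S × A → S → ℝ)
    (πE : Fin N → S → A → ℝ) (Ψ : S × A → Fin nc → ℝ)
    (i : Fin N) (π : S → A → ℝ) : ℝ :=
  ∑ j, |∑ p : S × A, Ψ p j *
    (occ γ ν (P i) π p.1 p.2 - occ γ ν (P i) (πE i) p.1 p.2)|

/-- The CAL objective `Σ_i ‖Ψᵀ μ^i_{π_i} − Ψᵀ μ^i_{π^{E_i}}‖₁`. -/
noncomputable def calObj {N nc : ℕ} [Fintype S] [Fintype A] [DecidableEq S]
    (γ : ℝ) (ν : S → ℝ) (P : Fin N → S × A → S → ℝ)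
    (πE : Fin N → S → A → ℝ) (Ψ : S × A → Fin nc → ℝ)
    (q : (Fin N → S → A → ℝ) × (S → A → ℝ)) : ℝ :=
  ∑ i, discrep γ ν P πE Ψ i (q.1 i)

/-- The CAL feasibility set `Φ(ε)`: tuples `(π_1,…,π_N,π_c)` of stationary policies with
`max_{(s,a)} |π_i(s,a) − π_c(s,a)| ≤ ε` for all `i`. -/
def calFeas {N : ℕ} [Fintype A] (ε : ℝ) :
    Set ((Fin N → S → A → ℝ) × (S → A → ℝ)) :=
  {q | (∀ i, IsPolicy (q.1 i)) ∧ IsPolicy q.2 ∧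
    ∀ i s a, |q.1 i s a - q.2 s a| ≤ ε}

/-- The CAL optimizer set `S^CAL(ε)`. -/
noncomputable def SCAL {N nc : ℕ} [Fintype S] [Fintype A] [DecidableEq S]
    (γ : ℝ) (ν : S → ℝ) (P : Fin N → S × A → S → ℝ)
    (πE : Fin N → S → A → ℝ) (Ψ : S × A → Fin nc → ℝ) (ε : ℝ) :
    Set ((Fin N → S → A → ℝ) × (S → A → ℝ)) :=
  {q | q ∈ calFeas ε ∧ ∀ q' ∈ calFeas ε,
    calObj γ ν P πE Ψ q ≤ calObj γ ν P πE Ψ q'}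

/-- The decoupled optimizer set `S^dec_i`. -/
noncomputable def Sdec {N nc : ℕ} [Fintype S] [Fintype A] [DecidableEq S]
    (γ : ℝ) (ν : S → ℝ) (P : Fin N → S × A → S → ℝ)
    (πE : Fin N → S → A → ℝ) (Ψ : S × A → Fin nc → ℝ) (i : Fin N) :
    Set (S → A → ℝ) :=
  {π | IsPolicy π ∧ ∀ π', IsPolicy π' →
    discrep γ ν P πE Ψ i π ≤ discrep γ ν P πE Ψ i π'}

/-- The centralized optimizer set `S^cen`. -/
noncomputable def Scen {N nc : ℕ} [Fintype S] [Fintype A] [DecidableEq S]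
    (γ : ℝ) (ν : S → ℝ) (P : Fin N → S × A → S → ℝ)
    (πE : Fin N → S → A → ℝ) (Ψ : S × A → Fin nc → ℝ) :
    Set (S → A → ℝ) :=
  {π | IsPolicy π ∧ ∀ π', IsPolicy π' →
    (∑ i, discrep γ ν P πE Ψ i π) ≤ ∑ i, discrep γ ν P πE Ψ i π'}


set_option linter.unusedSectionVars false

section DomainLemmas
variable {S A : Type*} [Fintype S] [Fintype A] [DecidableEq S]

private lemma polMatrix_row_abs {P : S × A → S → ℝ} {π : S → A → ℝ}
    (hP : IsKernel P) (hπ : IsPolicy π) (s : S) :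
    ∑ s', |polMatrix P π s s'| = 1 := by
  have hnn : ∀ s', 0 ≤ polMatrix P π s s' := fun s' =>
    Finset.sum_nonneg fun a _ => mul_nonneg (hπ.1 s a) (hP.1 (s, a) s')
  calc ∑ s', |polMatrix P π s s'| = ∑ s', polMatrix P π s s' :=
        Finset.sum_congr rfl fun s' _ => abs_of_nonneg (hnn s')
    _ = ∑ a, ∑ s', π s a * P (s, a) s' := by
        simp only [polMatrix, Matrix.of_apply]
        rw [Finset.sum_comm]
    _ = ∑ a, π s a := Finset.sum_congr rfl fun a _ => by
        rw [← Finset.mul_sum, hP.2 (s, a), mul_one]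
    _ = 1 := hπ.2 s

private lemma polMatrix_sub_row {P : S × A → S → ℝ} {π π' : S → A → ℝ} {ε : ℝ}
    (hP : IsKernel P) (hd : ∀ s a, |π s a - π' s a| ≤ ε) (s : S) :
    ∑ s', |(polMatrix P π - polMatrix P π') s s'| ≤ (Fintype.card A : ℝ) * ε := by
  have key : ∀ s', |(polMatrix P π - polMatrix P π') s s'| ≤ ∑ a, ε * P (s, a) s' := by
    intro s'
    have e : (polMatrix P π - polMatrix P π') s s' = ∑ a, (π s a - π' s a) * P (s, a) s' := by
      simp only [Matrix.sub_apply, polMatrix, Matrix.of_apply, ← Finset.sum_sub_distrib,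
        sub_mul]
    rw [e]
    refine (Finset.abs_sum_le_sum_abs _ _).trans (Finset.sum_le_sum fun a _ => ?_)
    rw [abs_mul, abs_of_nonneg (hP.1 (s, a) s')]
    exact mul_le_mul_of_nonneg_right (hd s a) (hP.1 (s, a) s')
  calc ∑ s', |(polMatrix P π - polMatrix P π') s s'| ≤ ∑ s', ∑ a, ε * P (s, a) s' :=
        Finset.sum_le_sum fun s' _ => key s'
    _ = ∑ a, ε * ∑ s', P (s, a) s' := by
        rw [Finset.sum_comm]
        exact Finset.sum_congr rfl fun a _ => (Finset.mul_sum _ _ _).symm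
    _ = ∑ _a : A, ε := Finset.sum_congr rfl fun a _ => by rw [hP.2 (s, a), mul_one]
    _ = (Fintype.card A : ℝ) * ε := by
        rw [Finset.sum_const, nsmul_eq_mul, Finset.card_univ]

private lemma init_abs_sum {ν : S → ℝ} (hν : IsInitDist ν) : ∑ s', |ν s'| = 1 := by
  rw [← hν.2]
  exact Finset.sum_congr rfl fun s' _ => abs_of_nonneg (hν.1 s')

private lemma stateDist_term_bound {γ : ℝ} (hγ : γ ∈ Set.Ioo (0:ℝ) 1) {ν : S → ℝ}
    (hν : IsInitDist ν) {M : Matrix S S ℝ} (hM : OpB M 1) (t : ℕ) (s : S) :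
    |γ ^ t * ((M ^ t).mulVec ν s)| ≤ γ ^ t := by
  have h1 : |(M ^ t).mulVec ν s| ≤ 1 := by
    have h := (OpB.powB hM t) ν
    rw [init_abs_sum hν, mul_one] at h
    exact (single_abs_le_sum s).trans h
  rw [abs_mul, abs_of_nonneg (pow_nonneg hγ.1.le t)]
  calc γ ^ t * |(M ^ t).mulVec ν s| ≤ γ ^ t * 1 :=
        mul_le_mul_of_nonneg_left h1 (pow_nonneg hγ.1.le t)
    _ = γ ^ t := mul_one _

private lemma polMatrix_opB {P : S × A → S → ℝ} {π : S → A → ℝ}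
    (hP : IsKernel P) (hπ : IsPolicy π) : OpB (polMatrix P π).transpose 1 :=
  opB_transpose fun s => (polMatrix_row_abs hP hπ s).le

private lemma stateDist_abs_le {γ : ℝ} (hγ : γ ∈ Set.Ioo (0:ℝ) 1) {ν : S → ℝ}
    (hν : IsInitDist ν) {P : S × A → S → ℝ} (hP : IsKernel P) {π : S → A → ℝ}
    (hπ : IsPolicy π) (s : S) :
    |stateDist γ ν P π s| ≤ (1 - γ)⁻¹ := by
  have hM : OpB (polMatrix P π).transpose 1 := polMatrix_opB hP hπ
  have h := abs_tsum_le_tsum_of_le (summable_geom' hγ)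
    (fun t => stateDist_term_bound hγ hν hM t s)
  rw [tsum_geometric_of_lt_one hγ.1.le hγ.2] at h
  exact h

private lemma stateDist_sub_le {γ : ℝ} (hγ : γ ∈ Set.Ioo (0:ℝ) 1) {ν : S → ℝ}
    (hν : IsInitDist ν) {P : S × A → S → ℝ} (hP : IsKernel P) {π π' : S → A → ℝ}
    (hπ : IsPolicy π) (hπ' : IsPolicy π') {ε : ℝ} (hε : 0 ≤ ε)
    (hd : ∀ s a, |π s a - π' s a| ≤ ε) (s : S) :
    |stateDist γ ν P π s - stateDist γ ν P π' s| ≤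
      ε * (Fintype.card A : ℝ) * ∑' t : ℕ, (t : ℝ) * γ ^ t := by
  set X := (polMatrix P π).transpose with hXdef
  set Y := (polMatrix P π').transpose with hYdef
  have hX : OpB X 1 := polMatrix_opB hP hπ
  have hY : OpB Y 1 := polMatrix_opB hP hπ'
  have hXY : OpB (X - Y) ((Fintype.card A : ℝ) * ε) := by
    rw [hXdef, hYdef, ← Matrix.transpose_sub]
    exact opB_transpose fun s => polMatrix_sub_row hP hd s
  have hsf : Summable (fun t : ℕ => γ ^ t * ((X ^ t).mulVec ν s)) :=
    Summable.of_norm_bounded (summable_geom' hγ)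
      (fun t => stateDist_term_bound hγ hν hX t s)
  have hsg : Summable (fun t : ℕ => γ ^ t * ((Y ^ t).mulVec ν s)) :=
    Summable.of_norm_bounded (summable_geom' hγ)
      (fun t => stateDist_term_bound hγ hν hY t s)
  have hdiff : stateDist γ ν P π s - stateDist γ ν P π' s
      = ∑' t : ℕ, (γ ^ t * ((X ^ t).mulVec ν s) - γ ^ t * ((Y ^ t).mulVec ν s)) := by
    have e1 : stateDist γ ν P π s = ∑' t : ℕ, γ ^ t * ((X ^ t).mulVec ν s) := rfl
    have e2 : stateDist γ ν P π' s = ∑' t : ℕ, γ ^ t * ((Y ^ t).mulVec ν s) := rfl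
    rw [e1, e2, Summable.tsum_sub hsf hsg]
  have hbound : ∀ t : ℕ, |γ ^ t * ((X ^ t).mulVec ν s) - γ ^ t * ((Y ^ t).mulVec ν s)|
      ≤ (ε * (Fintype.card A : ℝ)) * ((t : ℝ) * γ ^ t) := by
    intro t
    have e : γ ^ t * ((X ^ t).mulVec ν s) - γ ^ t * ((Y ^ t).mulVec ν s)
        = γ ^ t * ((X ^ t - Y ^ t).mulVec ν s) := by
      rw [Matrix.sub_mulVec, Pi.sub_apply]; ring
    rw [e, abs_mul, abs_of_nonneg (pow_nonneg hγ.1.le t)]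
    have h2 : |(X ^ t - Y ^ t).mulVec ν s| ≤ (t : ℝ) * ((Fintype.card A : ℝ) * ε) := by
      have h := (opB_pow_sub (by positivity) hX hY hXY t) ν
      rw [init_abs_sum hν, mul_one] at h
      exact (single_abs_le_sum s).trans h
    calc γ ^ t * |(X ^ t - Y ^ t).mulVec ν s|
        ≤ γ ^ t * ((t : ℝ) * ((Fintype.card A : ℝ) * ε)) :=
          mul_le_mul_of_nonneg_left h2 (pow_nonneg hγ.1.le t)
      _ = (ε * (Fintype.card A : ℝ)) * ((t : ℝ) * γ ^ t) := by ring
  rw [hdiff]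
  have h := abs_tsum_le_tsum_of_le ((summable_tgeom' hγ).mul_left _) hbound
  rw [tsum_mul_left] at h
  calc |∑' t : ℕ, (γ ^ t * ((X ^ t).mulVec ν s) - γ ^ t * ((Y ^ t).mulVec ν s))|
      ≤ ε * (Fintype.card A : ℝ) * ∑' t : ℕ, (t : ℝ) * γ ^ t := h

private lemma discrep_lipschitz {N nc : ℕ} {γ : ℝ} (hγ : γ ∈ Set.Ioo (0:ℝ) 1)
    {ν : S → ℝ} (hν : IsInitDist ν) {P : Fin N → S × A → S → ℝ} (hP : ∀ i, IsKernel (P i))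
    (πE : Fin N → S → A → ℝ) (Ψ : S × A → Fin nc → ℝ) :
    ∃ L : ℝ, 0 ≤ L ∧ ∀ (i : Fin N) (π π' : S → A → ℝ), IsPolicy π → IsPolicy π' →
      ∀ ε : ℝ, 0 ≤ ε → (∀ s a, |π s a - π' s a| ≤ ε) →
        discrep γ ν P πE Ψ i π ≤ discrep γ ν P πE Ψ i π' + L * ε := by
  have hγ1 : (0:ℝ) < 1 - γ := by linarith [hγ.2]
  set K : ℝ := ∑' t : ℕ, (t : ℝ) * γ ^ t with hKdef
  have hK0 : 0 ≤ K := tsum_nonneg fun t => mul_nonneg (Nat.cast_nonneg _) (pow_nonneg hγ.1.le t)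
  set D : ℝ := (1 - γ)⁻¹ + (Fintype.card A : ℝ) * K with hDdef
  have hD0 : 0 ≤ D := add_nonneg (inv_nonneg.2 hγ1.le) (mul_nonneg (Nat.cast_nonneg _) hK0)
  have hΨ0 : 0 ≤ ∑ c, ∑ p : S × A, |Ψ p c| :=
    Finset.sum_nonneg fun c _ => Finset.sum_nonneg fun p _ => abs_nonneg _
  refine ⟨(∑ c, ∑ p : S × A, |Ψ p c|) * D, mul_nonneg hΨ0 hD0, ?_⟩
  intro i π π' hπ hπ' ε hε hd
  have hocc : ∀ p : S × A, |occ γ ν (P i) π p.1 p.2 - occ γ ν (P i) π' p.1 p.2| ≤ D * ε := by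
    rintro ⟨s, a⟩
    have e : occ γ ν (P i) π s a - occ γ ν (P i) π' s a
        = π s a * (stateDist γ ν (P i) π s - stateDist γ ν (P i) π' s)
          + (π s a - π' s a) * stateDist γ ν (P i) π' s := by
      simp only [occ]; ring
    have hπ1 : |π s a| ≤ 1 := by
      rw [abs_of_nonneg (hπ.1 s a)]
      calc π s a ≤ ∑ a', π s a' :=
            Finset.single_le_sum (fun a' _ => hπ.1 s a') (Finset.mem_univ a)
        _ = 1 := hπ.2 s
    rw [e]
    refine (abs_add_le _ _).trans ?_
    rw [abs_mul, abs_mul]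
    have h1 : |π s a| * |stateDist γ ν (P i) π s - stateDist γ ν (P i) π' s|
        ≤ 1 * (ε * (Fintype.card A : ℝ) * K) :=
      mul_le_mul hπ1 (stateDist_sub_le hγ hν (hP i) hπ hπ' hε hd s) (abs_nonneg _) zero_le_one
    have h2 : |π s a - π' s a| * |stateDist γ ν (P i) π' s| ≤ ε * (1 - γ)⁻¹ :=
      mul_le_mul (hd s a) (stateDist_abs_le hγ hν (hP i) hπ' s) (abs_nonneg _) hε
    calc |π s a| * |stateDist γ ν (P i) π s - stateDist γ ν (P i) π' s|
          + |π s a - π' s a| * |stateDist γ ν (P i) π' s|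
        ≤ 1 * (ε * (Fintype.card A : ℝ) * K) + ε * (1 - γ)⁻¹ := add_le_add h1 h2
      _ = D * ε := by rw [hDdef]; ring
  have key : discrep γ ν P πE Ψ i π - discrep γ ν P πE Ψ i π'
      ≤ (∑ c, ∑ p : S × A, |Ψ p c|) * (D * ε) := by
    rw [discrep, discrep, ← Finset.sum_sub_distrib]
    calc ∑ c, (|∑ p : S × A, Ψ p c * (occ γ ν (P i) π p.1 p.2 - occ γ ν (P i) (πE i) p.1 p.2)|
            - |∑ p : S × A, Ψ p c * (occ γ ν (P i) π' p.1 p.2 - occ γ ν (P i) (πE i) p.1 p.2)|)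
        ≤ ∑ c, |∑ p : S × A, Ψ p c * (occ γ ν (P i) π p.1 p.2 - occ γ ν (P i) (πE i) p.1 p.2)
            - ∑ p : S × A, Ψ p c * (occ γ ν (P i) π' p.1 p.2 - occ γ ν (P i) (πE i) p.1 p.2)| :=
          Finset.sum_le_sum fun c _ => abs_sub_abs_le_abs_sub _ _
      _ = ∑ c, |∑ p : S × A, Ψ p c * (occ γ ν (P i) π p.1 p.2 - occ γ ν (P i) π' p.1 p.2)| := by
          refine Finset.sum_congr rfl fun c _ => ?_
          rw [← Finset.sum_sub_distrib]
          congr 1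
          exact Finset.sum_congr rfl fun p _ => by ring
      _ ≤ ∑ c, ∑ p : S × A, |Ψ p c| * (D * ε) := by
          refine Finset.sum_le_sum fun c _ => ?_
          refine (Finset.abs_sum_le_sum_abs _ _).trans (Finset.sum_le_sum fun p _ => ?_)
          rw [abs_mul]
          exact mul_le_mul_of_nonneg_left (hocc p) (abs_nonneg _)
      _ = (∑ c, ∑ p : S × A, |Ψ p c|) * (D * ε) := by
          rw [Finset.sum_mul]
          exact Finset.sum_congr rfl fun c _ => (Finset.sum_mul _ _ _).symm
  have : (∑ c, ∑ p : S × A, |Ψ p c|) * (D * ε) = (∑ c, ∑ p : S × A, |Ψ p c|) * D * ε := by ring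
  linarith [key]

end DomainLemmas

/-- generic performance, second part: fix `j` and `π^dec_j ∈ S^dec_j`.
If some centralized optimizer `π^cen ∈ S^cen` satisfies `V_{β̄}(π^cen) < V_{β̄}(π^dec_j)`
(with `β̄ = (1/N,…,1/N)`), then there is `ε̄ > 0` such that for every `ε ∈ [0, ε̄)` and
every CAL optimizer `(π*_1,…,π*_N,π*_c) ∈ S^CAL(ε)`, `V_{β̄}(π*_j) ≤ V_{β̄}(π^dec_j)`. -/
theorem stmt12 [Fintype S] [Fintype A] [Nonempty S] [Nonempty A] [DecidableEq S]
    {N nc : ℕ}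
    (γ : ℝ) (hγ : γ ∈ Set.Ioo (0 : ℝ) 1)
    (ν : S → ℝ) (hν : IsInitDist ν)
    (P : Fin N → S × A → S → ℝ) (hP : ∀ i, IsKernel (P i))
    (πE : Fin N → S → A → ℝ) (hπE : ∀ i, IsPolicy (πE i))
    (Ψ : S × A → Fin nc → ℝ)
    (j : Fin N) (πdec : S → A → ℝ) (hdec : πdec ∈ Sdec γ ν P πE Ψ j)
    (hlt : ∃ πcen ∈ Scen γ ν P πE Ψ,
      (1 / (N : ℝ)) * ∑ k, discrep γ ν P πE Ψ k πcen <
        (1 / (N : ℝ)) * ∑ k, discrep γ ν P πE Ψ k πdec) :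
    ∃ εbar > 0, ∀ ε : ℝ, 0 ≤ ε → ε < εbar →
      ∀ q ∈ SCAL γ ν P πE Ψ ε,
        (1 / (N : ℝ)) * ∑ k, discrep γ ν P πE Ψ k (q.1 j) ≤
          (1 / (N : ℝ)) * ∑ k, discrep γ ν P πE Ψ k πdec := by
  classical
  obtain ⟨πcen, hcen, hltV⟩ := hlt
  have hN : 0 < N := j.pos
  have hNinv : (0:ℝ) < 1 / (N : ℝ) := by positivity
  have hsum : ∑ k, discrep γ ν P πE Ψ k πcen < ∑ k, discrep γ ν P πE Ψ k πdec :=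
    lt_of_mul_lt_mul_left hltV hNinv.le
  obtain ⟨L, hL0, hLip⟩ := discrep_lipschitz hγ hν hP πE Ψ
  set δ : ℝ := (∑ k, discrep γ ν P πE Ψ k πdec) - ∑ k, discrep γ ν P πE Ψ k πcen with hδdef
  have hδpos : 0 < δ := sub_pos.2 hsum
  refine ⟨δ / (2 * N * L + 1), by positivity, ?_⟩
  intro ε hε0 hεlt q hq
  obtain ⟨⟨hq1, hq2, hq3⟩, hopt⟩ := hq
  have hfeas : ((fun _ => πcen, πcen) : (Fin N → S → A → ℝ) × (S → A → ℝ)) ∈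
      calFeas (S := S) (A := A) (N := N) ε := by
    refine ⟨fun _ => hcen.1, hcen.1, fun i s a => by simpa using hε0⟩
  have hobj : calObj γ ν P πE Ψ q ≤ ∑ k, discrep γ ν P πE Ψ k πcen := by
    simpa [calObj] using hopt _ hfeas
  have step1 : ∀ k, discrep γ ν P πE Ψ k (q.1 j) ≤ discrep γ ν P πE Ψ k q.2 + L * ε :=
    fun k => hLip k _ _ (hq1 j) hq2 ε hε0 (hq3 j)
  have step2 : ∀ k, discrep γ ν P πE Ψ k q.2 ≤ discrep γ ν P πE Ψ k (q.1 k) + L * ε :=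
    fun k => hLip k _ _ hq2 (hq1 k) ε hε0 (fun s a => by rw [abs_sub_comm]; exact hq3 k s a)
  have hεδ : ε * (2 * N * L + 1) < δ := by
    rw [← lt_div_iff₀ (by positivity)]
    exact hεlt
  have h2NL : 2 * (N : ℝ) * L * ε < δ := by
    nlinarith [mul_nonneg hε0 hL0]
  have main : ∑ k, discrep γ ν P πE Ψ k (q.1 j) ≤ ∑ k, discrep γ ν P πE Ψ k πdec := by
    have c1 : ∑ k, discrep γ ν P πE Ψ k (q.1 j)
        ≤ (∑ k, discrep γ ν P πE Ψ k q.2) + (N : ℝ) * (L * ε) := by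
      calc ∑ k, discrep γ ν P πE Ψ k (q.1 j)
          ≤ ∑ k : Fin N, (discrep γ ν P πE Ψ k q.2 + L * ε) :=
            Finset.sum_le_sum fun k _ => step1 k
        _ = (∑ k, discrep γ ν P πE Ψ k q.2) + (N : ℝ) * (L * ε) := by
            rw [Finset.sum_add_distrib, Finset.sum_const, Finset.card_univ, Fintype.card_fin,
              nsmul_eq_mul]
    have c2 : ∑ k, discrep γ ν P πE Ψ k q.2
        ≤ calObj γ ν P πE Ψ q + (N : ℝ) * (L * ε) := by
      calc ∑ k, discrep γ ν P πE Ψ k q.2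
          ≤ ∑ k : Fin N, (discrep γ ν P πE Ψ k (q.1 k) + L * ε) :=
            Finset.sum_le_sum fun k _ => step2 k
        _ = calObj γ ν P πE Ψ q + (N : ℝ) * (L * ε) := by
            rw [Finset.sum_add_distrib, Finset.sum_const, Finset.card_univ, Fintype.card_fin,
              nsmul_eq_mul, calObj]
    have : ∑ k, discrep γ ν P πE Ψ k (q.1 j)
        ≤ (∑ k, discrep γ ν P πE Ψ k πcen) + 2 * (N : ℝ) * L * ε := by
      have := le_trans c1 (by linarith [c2, hobj] :
        (∑ k, discrep γ ν P πE Ψ k q.2) + (N : ℝ) * (L * ε)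
          ≤ (∑ k, discrep γ ν P πE Ψ k πcen) + 2 * (N : ℝ) * L * ε)
      exact this
    linarith [h2NL]
  exact mul_le_mul_of_nonneg_left main hNinv.le
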